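/- arXiv:math/0201148 — 2 statements merged into one kernel-verified Lean document; each statement's English description precedes it below -/
import Mathlib

section
/- The number of parking functions on {1,…,n} is (n+1)^{n-1}. -/
open Finset

namespace Stmt2

variable {n : ℕ}

def C (g : Fin n → ZMod (n+1)) (j : ZMod (n+1)) : ℕ :=
  (univ.filter (fun i => g i = j)).card

def P (h : Fin n → ZMod (n+1)) : Prop :=
  ∀ k : ℕ, k < n → k + 1 ≤ (univ.filter (fun i => (h i).val ≤ k)).card

instance (h : Fin n → ZMod (n+1)) : Decidable (P h) := by
  unfold P; infer_instance

def H (g : Fin n → ZMod (n+1)) (m : ℕ) : ℤ :=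
  (∑ t ∈ Finset.range m, (C g (t : ZMod (n+1)) : ℤ)) - m

lemma sum_range_zmod (f : ZMod (n+1) → ℤ) :
    ∑ t ∈ Finset.range (n+1), f (t : ZMod (n+1)) = ∑ j : ZMod (n+1), f j := by
  rw [← Fin.sum_univ_eq_sum_range (fun t => f (t : ZMod (n+1)))]
  apply Fintype.sum_bijective (fun t : Fin (n+1) => ((t : ℕ) : ZMod (n+1)))
  · rw [Fintype.bijective_iff_injective_and_card]
    constructor
    · intro x y hxy
      have h2 := congrArg ZMod.val hxy
      rw [ZMod.val_cast_of_lt x.isLt, ZMod.val_cast_of_lt y.isLt] at h2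
      exact Fin.ext h2
    · simp [ZMod.card]
  · intro x; rfl

lemma sum_C_univ (g : Fin n → ZMod (n+1)) : ∑ j : ZMod (n+1), (C g j : ℤ) = n := by
  have h : ∑ j : ZMod (n+1), C g j = n := by
    have := Finset.card_eq_sum_card_fiberwise
      (s := (univ : Finset (Fin n))) (t := (univ : Finset (ZMod (n+1)))) (f := g)
      (fun x _ => mem_univ _)
    simpa [C, Finset.card_univ] using this.symm
  exact_mod_cast congrArg (Nat.cast : ℕ → ℤ) h

lemma H_add (g : Fin n → ZMod (n+1)) (s m : ℕ) :
    H g (s + m) = H g s + ((∑ t ∈ Finset.range m, (C g (((s + t : ℕ)) : ZMod (n+1)) : ℤ)) - m) := by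
  unfold H
  rw [Finset.sum_range_add (fun t => (C g (t : ZMod (n+1)) : ℤ)) s m]
  push_cast
  ring

lemma H_period (g : Fin n → ZMod (n+1)) (m : ℕ) :
    H g (m + (n+1)) = H g m - 1 := by
  rw [H_add g m (n+1)]
  have h1 : ∑ t ∈ Finset.range (n+1), (C g (((m + t : ℕ)) : ZMod (n+1)) : ℤ)
      = ∑ t ∈ Finset.range (n+1), (C g (((m : ℕ) : ZMod (n+1)) + ((t : ℕ) : ZMod (n+1))) : ℤ) := by
    apply Finset.sum_congr rfl
    intro t _
    rw [Nat.cast_add]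
  have h2 : ∑ t ∈ Finset.range (n+1), (C g (((m : ℕ) : ZMod (n+1)) + ((t : ℕ) : ZMod (n+1))) : ℤ)
      = ∑ j : ZMod (n+1), (C g (((m : ℕ) : ZMod (n+1)) + j) : ℤ) :=
    sum_range_zmod (fun j => (C g (((m : ℕ) : ZMod (n+1)) + j) : ℤ))
  have h3 : ∑ j : ZMod (n+1), (C g (((m : ℕ) : ZMod (n+1)) + j) : ℤ)
      = ∑ j : ZMod (n+1), (C g j : ℤ) :=
    Fintype.sum_equiv (Equiv.addLeft ((m : ℕ) : ZMod (n+1)))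
      (fun j => (C g (((m : ℕ) : ZMod (n+1)) + j) : ℤ)) (fun j => (C g j : ℤ))
      (fun j => rfl)
  rw [h1, h2, h3, sum_C_univ]
  push_cast
  ring

lemma card_shift (g : Fin n → ZMod (n+1)) (a : ZMod (n+1)) (k : ℕ) (hk : k < n) :
    (univ.filter (fun i => (g i + a).val ≤ k)).card
      = ∑ t ∈ Finset.range (k+1), C g ((((-a).val + t : ℕ)) : ZMod (n+1)) := by
  set s := (-a).val with hs
  have hsc : ((s : ℕ) : ZMod (n+1)) = -a := ZMod.natCast_rightInverse (-a)
  have key : ∀ j : ZMod (n+1), (((s + (j + a).val : ℕ)) : ZMod (n+1)) = j := by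
    intro j
    rw [Nat.cast_add, hsc, ZMod.natCast_rightInverse (j + a)]
    ring
  have key2 : ∀ t : ℕ, t < n + 1 → ((((s + t : ℕ)) : ZMod (n+1)) + a).val = t := by
    intro t htn
    have e : (((s + t : ℕ) : ZMod (n+1)) + a) = (t : ZMod (n+1)) := by
      rw [Nat.cast_add, hsc]; ring
    rw [e, ZMod.val_cast_of_lt htn]
  have h1 : (univ.filter (fun i => (g i + a).val ≤ k)).card
      = ∑ j ∈ univ.filter (fun j : ZMod (n+1) => (j + a).val ≤ k), C g j := by
    rw [Finset.card_eq_sum_card_fiberwise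
      (s := univ.filter (fun i => (g i + a).val ≤ k))
      (t := univ.filter (fun j : ZMod (n+1) => (j + a).val ≤ k)) (f := g)
      (fun x hx => by simpa using (Finset.mem_filter.mp hx).2)]
    apply Finset.sum_congr rfl
    intro j hj
    have hjk : (j + a).val ≤ k := (Finset.mem_filter.mp hj).2
    unfold C
    congr 1
    ext i
    simp only [Finset.mem_filter, Finset.mem_univ, true_and, Finset.filter_filter]
    constructor
    · rintro ⟨_, h2⟩; exact h2
    · intro h2; exact ⟨by rw [h2]; exact hjk, h2⟩
  rw [h1]
  apply Finset.sum_bij' (i := fun j _ => (j + a).val)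
    (j := fun t _ => (((s + t : ℕ)) : ZMod (n+1)))
  · intro j hj
    exact Finset.mem_range.mpr (Nat.lt_succ_of_le (Finset.mem_filter.mp hj).2)
  · intro t ht
    have htn : t < n + 1 := lt_of_lt_of_le (Finset.mem_range.mp ht) (Nat.succ_le_succ (le_of_lt hk))
    refine Finset.mem_filter.mpr ⟨mem_univ _, ?_⟩
    rw [key2 t htn]
    exact Nat.lt_succ_iff.mp (Finset.mem_range.mp ht)
  · intro j hj
    exact key j
  · intro t ht
    have htn : t < n + 1 := lt_of_lt_of_le (Finset.mem_range.mp ht) (Nat.succ_le_succ (le_of_lt hk))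
    exact key2 t htn
  · intro j hj
    rw [key j]


def Good (g : Fin n → ZMod (n+1)) (s : ℕ) : Prop :=
  ∀ m : ℕ, 1 ≤ m → m ≤ n → H g s ≤ H g (s + m)

lemma H_card (g : Fin n → ZMod (n+1)) (a : ZMod (n+1)) (k : ℕ) (hk : k < n) :
    H g ((-a).val + (k+1)) - H g ((-a).val)
      = ((univ.filter (fun i => (g i + a).val ≤ k)).card : ℤ) - (k+1) := by
  rw [H_add, card_shift g a k hk]
  push_cast
  ring

lemma P_shift_iff (g : Fin n → ZMod (n+1)) (a : ZMod (n+1)) :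
    P (fun i => g i + a) ↔ Good g ((-a).val) := by
  unfold P Good
  constructor
  · intro hp m hm1 hmn
    obtain ⟨k, rfl⟩ : ∃ k, m = k + 1 := ⟨m - 1, by omega⟩
    have hk : k < n := by omega
    have h := hp k hk
    have h2 := H_card g a k hk
    have h3 : ((k:ℤ)+1) ≤ ((univ.filter (fun i => (g i + a).val ≤ k)).card : ℤ) := by
      exact_mod_cast h
    linarith
  · intro hg k hk
    have h2 := H_card g a k hk
    have h := hg (k+1) (by omega) (by omega)
    have h3 : ((k:ℤ)+1) ≤ ((univ.filter (fun i => (g i + a).val ≤ k)).card : ℤ) := by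
      linarith
    exact_mod_cast h3

lemma exists_good (g : Fin n → ZMod (n+1)) : ∃ s, s ≤ n ∧ Good g s := by
  obtain ⟨x0, hx0, hmin0⟩ := Finset.exists_min_image (Finset.range (n+1)) (H g)
    ⟨0, Finset.mem_range.mpr (Nat.succ_pos n)⟩
  set v := H g x0 with hv
  have hex : ∃ x, x ≤ n ∧ H g x = v := ⟨x0, Nat.lt_succ_iff.mp (Finset.mem_range.mp hx0), rfl⟩
  obtain ⟨s, ⟨hsr, hsv⟩, hleast⟩ :
      ∃ s, (s ≤ n ∧ H g s = v) ∧ ∀ x, x < s → ¬(x ≤ n ∧ H g x = v) :=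
    ⟨Nat.find hex, Nat.find_spec hex, fun x hx => Nat.find_min hex hx⟩
  have hsmin : ∀ y, y ≤ n → H g s ≤ H g y := by
    intro y hy
    rw [hsv]
    exact hmin0 y (Finset.mem_range.mpr (by omega))
  have hstrict : ∀ x, x < s → H g s + 1 ≤ H g x := by
    intro x hx
    have hxn : x ≤ n := by omega
    have hne : H g x ≠ v := fun hcon => hleast x hx ⟨hxn, hcon⟩
    have h2 := hsmin x hxn
    omega
  refine ⟨s, hsr, ?_⟩
  intro m hm1 hmn
  by_cases hc : s + m ≤ n
  · exact hsmin (s+m) hc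
  · have hx : s + m = (s + m - (n+1)) + (n+1) := by omega
    have hlt : s + m - (n+1) < s := by omega
    have := hstrict _ hlt
    rw [hx, H_period]
    omega

lemma good_not_both (g : Fin n → ZMod (n+1)) {s s' : ℕ} (hlt : s < s') (hs' : s' ≤ n)
    (h1 : Good g s) (h2 : Good g s') : False := by
  have e1 : H g s ≤ H g s' := by
    have := h1 (s' - s) (by omega) (by omega)
    rwa [show s + (s' - s) = s' by omega] at this
  have e2 : H g s' ≤ H g (s + (n+1)) := by
    have := h2 (s + n + 1 - s') (by omega) (by omega)
    rwa [show s' + (s + n + 1 - s') = s + (n+1) by omega] at this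
  rw [H_period] at e2
  omega

lemma good_unique (g : Fin n → ZMod (n+1)) {s s' : ℕ} (hs : s ≤ n) (hs' : s' ≤ n)
    (h1 : Good g s) (h2 : Good g s') : s = s' := by
  rcases lt_trichotomy s s' with h | h | h
  · exact absurd (good_not_both g h hs' h1 h2) (by simp)
  · exact h
  · exact absurd (good_not_both g h hs h2 h1) (by simp)

lemma existsUnique_shift (g : Fin n → ZMod (n+1)) :
    ∃! a : ZMod (n+1), P (fun i => g i + a) := by
  obtain ⟨s, hs, hgood⟩ := exists_good g
  refine ⟨-(s : ZMod (n+1)), ?_, ?_⟩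
  · show P fun i => g i + (-(s : ZMod (n+1)))
    rw [P_shift_iff]
    have : (-(-(s : ZMod (n+1)))).val = s := by
      rw [neg_neg, ZMod.val_cast_of_lt (by omega)]
    rwa [this]
  · intro a' ha'
    rw [P_shift_iff] at ha'
    have hval : (-a').val ≤ n := Nat.lt_succ_iff.mp ((-a').val_lt)
    have heq : (-a').val = s := good_unique g hval hs ha' hgood
    have : ((-a').val : ZMod (n+1)) = -a' := ZMod.natCast_rightInverse (-a')
    rw [heq] at this
    rw [this, neg_neg]


lemma card_P_mul :
    Fintype.card {h : Fin n → ZMod (n+1) // P h} * (n+1) = (n+1)^n := by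
  have hbij : Function.Bijective
      (fun p : {h : Fin n → ZMod (n+1) // P h} × ZMod (n+1) => fun i => p.1.1 i - p.2) := by
    constructor
    · rintro ⟨⟨h, hh⟩, a⟩ ⟨⟨h', hh'⟩, a'⟩ heq
      simp only at heq
      set g : Fin n → ZMod (n+1) := fun i => h i - a with hg
      have e1 : (fun i => g i + a) = h := by funext i; simp [hg]
      have e2 : (fun i => g i + a') = h' := by
        funext i
        have h3 : h i - a = h' i - a' := congrFun heq i
        show h i - a + a' = h' i
        rw [h3]
        ring
      have pa : P (fun i => g i + a) := by rw [e1]; exact hh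
      have pa' : P (fun i => g i + a') := by rw [e2]; exact hh'
      obtain ⟨b, hb, hun⟩ := existsUnique_shift g
      have haa : a = a' := (hun a pa).trans (hun a' pa').symm
      subst haa
      have hhh : h = h' := by rw [← e1, ← e2]
      simp [hhh]
    · intro g
      obtain ⟨a, ha, -⟩ := existsUnique_shift g
      refine ⟨(⟨fun i => g i + a, ha⟩, a), ?_⟩
      funext i
      simp
  have hc := Fintype.card_congr (Equiv.ofBijective _ hbij)
  rw [Fintype.card_prod, Fintype.card_fun, Fintype.card_fin, ZMod.card] at hc
  exact hc

lemma val_lt_of_P (h : Fin n → ZMod (n+1)) (hP : P h) (i : Fin n) : (h i).val < n := by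
  by_contra hc
  push_neg at hc
  have hn : (h i).val = n := le_antisymm (Nat.lt_succ_iff.mp (h i).val_lt) hc
  have hpos : 0 < n := i.pos
  have h1 := hP (n-1) (by omega)
  have hsub : univ.filter (fun j => (h j).val ≤ n-1) ⊆ univ.erase i := by
    intro j hj
    rw [Finset.mem_erase]
    refine ⟨?_, mem_univ _⟩
    rintro rfl
    have := (Finset.mem_filter.mp hj).2
    omega
  have h2 := Finset.card_le_card hsub
  rw [Finset.card_erase_of_mem (mem_univ i), Finset.card_univ, Fintype.card_fin] at h2
  omega

def parkEquiv :
    {f : Fin n → Fin n //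
      ∀ k : Fin n, (k : ℕ) + 1 ≤ (Finset.univ.filter (fun i => f i ≤ k)).card}
      ≃ {h : Fin n → ZMod (n+1) // P h} where
  toFun f := ⟨fun i => ((f.1 i : ℕ) : ZMod (n+1)), by
    intro k hk
    have h1 := f.2 ⟨k, hk⟩
    have he : univ.filter (fun i => (((f.1 i : ℕ) : ZMod (n+1))).val ≤ k)
        = univ.filter (fun i => f.1 i ≤ (⟨k, hk⟩ : Fin n)) := by
      apply Finset.filter_congr
      intro i _
      rw [ZMod.val_cast_of_lt (lt_trans (f.1 i).isLt (Nat.lt_succ_self n))]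
      simp [Fin.le_def]
    rw [he]
    exact h1⟩
  invFun h := ⟨fun i => ⟨(h.1 i).val, val_lt_of_P h.1 h.2 i⟩, by
    intro k
    have h1 := h.2 k.1 k.2
    have he : univ.filter (fun i => (⟨(h.1 i).val, val_lt_of_P h.1 h.2 i⟩ : Fin n) ≤ k)
        = univ.filter (fun i => (h.1 i).val ≤ (k : ℕ)) := by
      apply Finset.filter_congr
      intro i _
      simp [Fin.le_def]
    rw [he]
    exact h1⟩
  left_inv f := Subtype.ext (funext fun i => Fin.ext (by
    simp [ZMod.val_cast_of_lt (lt_trans (f.1 i).isLt (Nat.lt_succ_self n))]))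
  right_inv h := Subtype.ext (funext fun i => ZMod.natCast_rightInverse (h.1 i))

end Stmt2

/-- The number of parking functions on {1,…,n} is (n+1)^(n-1).
A function f : Fin n → Fin n is a parking function if for each k, at least
k+1 of the values f i are ≤ k (0-indexed version of |f⁻¹({1,…,k})| ≥ k). -/
theorem stmt_2 (n : ℕ) :
    Fintype.card {f : Fin n → Fin n //
      ∀ k : Fin n, (k : ℕ) + 1 ≤ (Finset.univ.filter (fun i => f i ≤ k)).card} =
      (n + 1) ^ (n - 1) := by
  have hcard := Fintype.card_congr (Stmt2.parkEquiv (n := n))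
  have hmul := Stmt2.card_P_mul (n := n)
  have hpow : (n+1)^(n-1) * (n+1) = (n+1)^n := by
    cases n with
    | zero => simp
    | succ m => rw [← pow_succ]; simp
  rw [hcard]
  exact Nat.eq_of_mul_eq_mul_right (Nat.succ_pos n) (by rw [hmul, ← hpow])
end

section
/- The space of diagonal harmonics DH_n = {f ∈ C[x,y] : p(∂x,∂y)f = 0 for all p ∈ m} is closed under each polarization operator E_k = Σ_{i=1}^n y_i ∂x_i^k for k > 0. -/
open MvPolynomial

noncomputable section

/-- The differential operator p(∂) applied to f. -/
def apolar {σ : Type} [Fintype σ] (g f : MvPolynomial σ ℂ) : MvPolynomial σ ℂ :=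
  ∑ m ∈ g.support, g.coeff m •
    (((Finset.univ : Finset σ).toList.map
      (fun i => ((pderiv i).toLinearMap : Module.End ℂ (MvPolynomial σ ℂ)) ^ m i)).prod f)

/-- p is a diagonal S_n-invariant with zero constant term (an element of 𝔪). -/
def InM (n : ℕ) (p : MvPolynomial (Fin n ⊕ Fin n) ℂ) : Prop :=
  (∀ σ : Equiv.Perm (Fin n), rename (Sum.map ⇑σ ⇑σ) p = p) ∧ constantCoeff p = 0

/-- The space of diagonal harmonics DH_n. -/
def DH (n : ℕ) : Set (MvPolynomial (Fin n ⊕ Fin n) ℂ) :=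
  {f | ∀ p, InM n p → apolar p f = 0}

/-- The polarization operator E_k = Σᵢ yᵢ ∂xᵢᵏ. -/
def Ek (n k : ℕ) (f : MvPolynomial (Fin n ⊕ Fin n) ℂ) :
    MvPolynomial (Fin n ⊕ Fin n) ℂ :=
  ∑ i : Fin n, X (Sum.inr i) *
    ((((pderiv (Sum.inl i)).toLinearMap :
        Module.End ℂ (MvPolynomial (Fin n ⊕ Fin n) ℂ)) ^ k) f)

section Aux

open Finsupp

set_option linter.unusedSectionVars false

variable {σ : Type} [Fintype σ]

/-- The endomorphism ∂ᵢ. -/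
def Pd (i : σ) : Module.End ℂ (MvPolynomial σ ℂ) := (pderiv i).toLinearMap

/-- Multiplication by X j as an endomorphism. -/
def Mx (j : σ) : Module.End ℂ (MvPolynomial σ ℂ) := LinearMap.mulLeft ℂ (X j)

lemma Pd_apply (i : σ) (f : MvPolynomial σ ℂ) : Pd i f = pderiv i f := rfl

lemma Mx_apply (j : σ) (f : MvPolynomial σ ℂ) : Mx j f = X j * f := rfl

lemma pd_comm (i j : σ) : Commute (Pd i) (Pd j) := by
  apply LinearMap.ext
  intro f
  induction f using MvPolynomial.induction_on' with
  | monomial s a =>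
    simp only [Module.End.mul_apply, Pd_apply, pderiv_monomial]
    rcases eq_or_ne i j with rfl | h
    · rfl
    · rw [Finsupp.tsub_apply, Finsupp.tsub_apply, Finsupp.single_eq_of_ne' h,
        Finsupp.single_eq_of_ne' (Ne.symm h)]
      rw [tsub_right_comm]
      simp only [Nat.sub_zero]
      ring_nf
  | add p q hp hq =>
    simp only [Module.End.mul_apply, map_add] at *
    rw [hp, hq]

set_option linter.unusedSectionVars false

lemma pd_mx_comm {i j : σ} (h : i ≠ j) : Commute (Pd i) (Mx j) := by
  apply LinearMap.ext
  intro f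
  simp only [Module.End.mul_apply, Pd_apply, Mx_apply, pderiv_mul,
    pderiv_X_of_ne (Ne.symm h), zero_mul, zero_add]

lemma pd_mx_self (j : σ) : Pd j * Mx j = Mx j * Pd j + 1 := by
  apply LinearMap.ext
  intro f
  simp only [LinearMap.add_apply, Module.End.mul_apply, Module.End.one_apply,
    Pd_apply, Mx_apply, pderiv_mul, pderiv_X_self, one_mul]
  ring

lemma pd_pow_mx (j : σ) (a : ℕ) :
    Pd j ^ (a + 1) * Mx j = Mx j * Pd j ^ (a + 1) + (a + 1) • Pd j ^ a := by
  induction a with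
  | zero => simpa using pd_mx_self j
  | succ a ih =>
    have : Pd j ^ (a + 1 + 1) * Mx j = Pd j * (Pd j ^ (a + 1) * Mx j) := by
      rw [← mul_assoc, pow_succ']
    rw [this, ih, mul_add, ← mul_assoc, pd_mx_self j, add_mul, one_mul,
      mul_smul_comm, ← pow_succ']
    rw [mul_assoc, ← pow_succ']
    module

/-- Product of powers of partial derivatives along a list. -/
def Dl (l : List σ) (m : σ →₀ ℕ) : Module.End ℂ (MvPolynomial σ ℂ) :=
  (l.map fun i => Pd i ^ m i).prod

lemma Dl_nil (m : σ →₀ ℕ) : Dl ([] : List σ) m = 1 := rfl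

lemma Dl_cons (x : σ) (l : List σ) (m : σ →₀ ℕ) :
    Dl (x :: l) m = Pd x ^ m x * Dl l m := by
  simp [Dl]

lemma commute_pow_Dl (j : σ) (b : ℕ) (l : List σ) (m : σ →₀ ℕ) :
    Commute (Pd j ^ b) (Dl l m) := by
  apply Commute.list_prod_right
  intro x hx
  simp only [List.mem_map] at hx
  obtain ⟨i, -, rfl⟩ := hx
  exact (pd_comm j i).pow_pow _ _

lemma commute_mx_Dl {j : σ} {m : σ →₀ ℕ} (hm : m j = 0) (l : List σ) :
    Commute (Mx j) (Dl l m) := by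
  apply Commute.list_prod_right
  intro x hx
  simp only [List.mem_map] at hx
  obtain ⟨i, -, rfl⟩ := hx
  rcases eq_or_ne i j with rfl | h
  · rw [hm, pow_zero]; exact Commute.one_right _
  · exact ((pd_mx_comm h).symm).pow_right _

lemma Dl_add (l : List σ) (m₁ m₂ : σ →₀ ℕ) :
    Dl l (m₁ + m₂) = Dl l m₁ * Dl l m₂ := by
  induction l with
  | nil => simp [Dl_nil]
  | cons x l ih =>
    rw [Dl_cons, Dl_cons, Dl_cons, Finsupp.add_apply, pow_add, ih,
      mul_assoc, mul_assoc]
    congr 1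
    rw [← mul_assoc, (commute_pow_Dl x (m₂ x) l m₁).eq, mul_assoc]

lemma Dl_single_not_mem {j : σ} {l : List σ} (h : j ∉ l) (a : ℕ) :
    Dl l (Finsupp.single j a) = 1 := by
  induction l with
  | nil => exact Dl_nil _
  | cons x l ih =>
    have hjx : j ≠ x := by rintro rfl; exact h (List.mem_cons_self)
    rw [Dl_cons, Finsupp.single_eq_of_ne' hjx, pow_zero, one_mul]
    exact ih (fun hh => h (List.mem_cons_of_mem x hh))

lemma Dl_single_mem {j : σ} {l : List σ} (hl : l.Nodup) (hj : j ∈ l) (a : ℕ) :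
    Dl l (Finsupp.single j a) = Pd j ^ a := by
  induction l with
  | nil => simp at hj
  | cons x l ih =>
    rw [List.nodup_cons] at hl
    rw [Dl_cons]
    rcases eq_or_ne x j with rfl | h
    · rw [Finsupp.single_eq_same, Dl_single_not_mem hl.1 a, mul_one]
    · rw [Finsupp.single_eq_of_ne' (Ne.symm h), pow_zero, one_mul]
      exact ih hl.2 ((List.mem_cons.mp hj).resolve_left (fun hh => h hh.symm))

/-- The operator for a monomial exponent. -/
def Dm (m : σ →₀ ℕ) : Module.End ℂ (MvPolynomial σ ℂ) := Dl Finset.univ.toList m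

lemma Dm_add (m₁ m₂ : σ →₀ ℕ) : Dm (m₁ + m₂) = Dm m₁ * Dm m₂ := Dl_add _ _ _

lemma Dm_single (j : σ) (a : ℕ) : Dm (Finsupp.single j a) = Pd j ^ a :=
  Dl_single_mem (Finset.nodup_toList _) (by simp) a

lemma commute_mx_Dm {j : σ} {m : σ →₀ ℕ} (hm : m j = 0) : Commute (Mx j) (Dm m) :=
  commute_mx_Dl hm _

lemma Dm_mx_comm (m : σ →₀ ℕ) (j : σ) :
    Dm m * Mx j = Mx j * Dm m + (m j : ℂ) • Dm (m - Finsupp.single j 1) := by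
  have hm : m.erase j + Finsupp.single j (m j) = m := Finsupp.erase_add_single j m
  rcases h : m j with _ | a
  · rw [Nat.cast_zero, zero_smul, add_zero]
    exact ((commute_mx_Dm h).symm).eq
  · have hz : m.erase j j = 0 := Finsupp.erase_same
    rw [h] at hm
    have he : m - Finsupp.single j 1 = m.erase j + Finsupp.single j a := by
      ext i
      rcases eq_or_ne i j with rfl | hij
      · simp [Finsupp.tsub_apply, h]
      · simp [Finsupp.tsub_apply, Finsupp.single_eq_of_ne' (Ne.symm hij),
          Finsupp.erase_ne hij]
    have h1 : Dm m = Dm (m.erase j) * Pd j ^ (a + 1) := by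
      conv_lhs => rw [← hm]
      rw [Dm_add, Dm_single]
    rw [he, h1, Dm_add, Dm_single]
    rw [mul_assoc, pd_pow_mx, mul_add, ← mul_assoc, ← (commute_mx_Dm hz).eq,
      mul_assoc, mul_smul_comm, Nat.cast_smul_eq_nsmul]

/-- The differential operator attached to a polynomial. -/
def Phi (p : MvPolynomial σ ℂ) : Module.End ℂ (MvPolynomial σ ℂ) :=
  ∑ m ∈ p.support, p.coeff m • Dm m

lemma apolar_eq_Phi (g f : MvPolynomial σ ℂ) : apolar g f = Phi g f := by
  rw [Phi, LinearMap.sum_apply]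
  rfl

lemma Phi_eq_sum_subset {p : MvPolynomial σ ℂ} {s : Finset (σ →₀ ℕ)}
    (h : p.support ⊆ s) : Phi p = ∑ m ∈ s, p.coeff m • Dm m := by
  refine Finset.sum_subset h ?_
  intro m _ hm
  rw [MvPolynomial.notMem_support_iff.mp hm, zero_smul]

lemma Phi_add (p q : MvPolynomial σ ℂ) : Phi (p + q) = Phi p + Phi q := by
  classical
  rw [Phi_eq_sum_subset (s := p.support ∪ q.support) MvPolynomial.support_add,
    Phi_eq_sum_subset (s := p.support ∪ q.support) Finset.subset_union_left,
    Phi_eq_sum_subset (s := p.support ∪ q.support) Finset.subset_union_right,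
    ← Finset.sum_add_distrib]
  refine Finset.sum_congr rfl fun m _ => ?_
  rw [MvPolynomial.coeff_add, add_smul]

lemma Phi_monomial (m : σ →₀ ℕ) (c : ℂ) : Phi (monomial m c) = c • Dm m := by
  classical
  rw [Phi_eq_sum_subset (s := {m}) MvPolynomial.support_monomial_subset,
    Finset.sum_singleton, MvPolynomial.coeff_monomial, if_pos rfl]

lemma Phi_mul (p q : MvPolynomial σ ℂ) : Phi (p * q) = Phi p * Phi q := by
  induction p using MvPolynomial.induction_on' with
  | add p₁ p₂ hp₁ hp₂ => rw [add_mul, Phi_add, Phi_add, hp₁, hp₂, add_mul]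
  | monomial m₁ c₁ =>
    induction q using MvPolynomial.induction_on' with
    | add q₁ q₂ hq₁ hq₂ => rw [mul_add, Phi_add, Phi_add, hq₁, hq₂, mul_add]
    | monomial m₂ c₂ =>
      rw [MvPolynomial.monomial_mul, Phi_monomial, Phi_monomial, Phi_monomial,
        Dm_add, smul_mul_assoc, mul_smul_comm, smul_smul]

lemma Phi_X_pow (j : σ) (k : ℕ) : Phi (X j ^ k) = Pd j ^ k := by
  rw [MvPolynomial.X_pow_eq_monomial, Phi_monomial, one_smul, Dm_single]

lemma Phi_mx_comm (p : MvPolynomial σ ℂ) (j : σ) :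
    Phi p * Mx j = Mx j * Phi p + Phi (pderiv j p) := by
  induction p using MvPolynomial.induction_on' with
  | add p₁ p₂ hp₁ hp₂ =>
    rw [Phi_add, add_mul, hp₁, hp₂, map_add, Phi_add, mul_add]
    abel
  | monomial m c =>
    rw [Phi_monomial, pderiv_monomial, Phi_monomial, smul_mul_assoc, Dm_mx_comm,
      smul_add, mul_smul_comm, smul_smul]

lemma Phi_zero : Phi (0 : MvPolynomial σ ℂ) = 0 := by
  simp [Phi]

lemma Phi_sum {α : Type*} (s : Finset α) (g : α → MvPolynomial σ ℂ) :
    Phi (∑ a ∈ s, g a) = ∑ a ∈ s, Phi (g a) := by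
  classical
  induction s using Finset.induction_on with
  | empty => simp [Phi_zero]
  | @insert _ _ h ih => rw [Finset.sum_insert h, Finset.sum_insert h, Phi_add, ih]

end Aux

/-- the space of diagonal harmonics is closed under each
polarization operator E_k, k > 0. -/
theorem stmt_7 (n k : ℕ) (hk : 0 < k) (f : MvPolynomial (Fin n ⊕ Fin n) ℂ)
    (hf : f ∈ DH n) : Ek n k f ∈ DH n := by
  intro p hp
  rw [apolar_eq_Phi]
  have hEk : Ek n k f = ∑ i : Fin n, Mx (Sum.inr i) ((Pd (Sum.inl i) ^ k) f) := rfl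
  have hpf : Phi p f = 0 := by rw [← apolar_eq_Phi]; exact hf p hp
  have key : ∀ i : Fin n, Phi p (Mx (Sum.inr i) ((Pd (Sum.inl i) ^ k) f))
      = Phi (pderiv (Sum.inr i) p * X (Sum.inl i) ^ k) f := by
    intro i
    have hc : Phi p * Pd (Sum.inl i) ^ k = Pd (Sum.inl i) ^ k * Phi p := by
      rw [← Phi_X_pow, ← Phi_mul, ← Phi_mul, mul_comm]
    have h2 : Phi p ((Pd (Sum.inl i) ^ k) f) = (Pd (Sum.inl i) ^ k) (Phi p f) := by
      rw [← Module.End.mul_apply, hc, Module.End.mul_apply]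
    rw [← Module.End.mul_apply, Phi_mx_comm, LinearMap.add_apply, Module.End.mul_apply,
      h2, hpf, map_zero, map_zero, zero_add, ← Phi_X_pow (Sum.inl i) k,
      ← Module.End.mul_apply, ← Phi_mul]
  rw [hEk, map_sum, Finset.sum_congr rfl (fun i _ => key i), ← LinearMap.sum_apply,
    ← Phi_sum, ← apolar_eq_Phi]
  apply hf
  constructor
  · intro π
    have hinj : Function.Injective (Sum.map ⇑π ⇑π) :=
      Function.Injective.sumMap π.injective π.injective
    rw [map_sum]
    have hterm : ∀ i : Fin n,
        rename (Sum.map ⇑π ⇑π) (pderiv (Sum.inr i) p * X (Sum.inl i) ^ k)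
          = pderiv (Sum.inr (π i)) p * X (Sum.inl (π i)) ^ k := by
      intro i
      rw [map_mul, map_pow, rename_X]
      have hd := pderiv_rename hinj (Sum.inr i) p
      rw [hp.1 π] at hd
      rw [← hd]
      rfl
    rw [Finset.sum_congr rfl (fun i _ => hterm i)]
    exact Equiv.sum_comp π (fun j => pderiv (Sum.inr j) p * X (Sum.inl j) ^ k)
  · rw [map_sum]
    refine Finset.sum_eq_zero fun i _ => ?_
    rw [map_mul, map_pow, constantCoeff_X, zero_pow hk.ne', mul_zero]

end
end
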